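/- For every n ≥ 1, the probabilist Hermite polynomial He_n has exactly n distinct real roots; that is, He_n has degree n and splits over ℝ with all roots simple. -/

import Mathlib

open Polynomial Filter Real Set

/-- Polynomial times gaussian tends to 0 at +∞. -/
lemma poly_gauss_tendsto_atTop (P : Polynomial ℝ) :
    Tendsto (fun x => P.eval x * Real.exp (-(x ^ 2 / 2))) atTop (nhds 0) := by
  have hg : Tendsto (fun x => |P.eval x| / Real.exp x) atTop (nhds 0) := by
    have := (P.tendsto_div_exp_atTop).abs
    rw [abs_zero] at this
    refine this.congr fun x => ?_
    rw [abs_div, Real.abs_exp]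
  apply squeeze_zero_norm' _ hg
  filter_upwards [eventually_ge_atTop (2 : ℝ)] with x hx
  rw [Real.norm_eq_abs, abs_mul, Real.abs_exp, div_eq_mul_inv (|P.eval x|), ← Real.exp_neg]
  apply mul_le_mul_of_nonneg_left _ (abs_nonneg _)
  apply Real.exp_le_exp.mpr
  nlinarith

lemma poly_gauss_tendsto_atBot (P : Polynomial ℝ) :
    Tendsto (fun x => P.eval x * Real.exp (-(x ^ 2 / 2))) atBot (nhds 0) := by
  have h := poly_gauss_tendsto_atTop (P.comp (-X))
  have h2 := h.comp tendsto_neg_atBot_atTop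
  refine h2.congr fun x => ?_
  simp [Function.comp, eval_comp, neg_pow]

/-- If `f b > 0` for some `b < M`, `f M = 0` and `f → 0` at `-∞`, then `deriv f` vanishes
somewhere left of `M`. -/
lemma rolle_aux (f : ℝ → ℝ) (hf : Differentiable ℝ f) (M b : ℝ) (hbM : b < M)
    (hM : f M = 0) (hb : 0 < f b) (hbot : Tendsto f atBot (nhds 0)) :
    ∃ y < M, deriv f y = 0 := by
  obtain ⟨A, hA⟩ : ∃ A, ∀ x ≤ A, f x < f b :=
    (eventually_atBot).mp (hbot.eventually_lt_const hb)
  set A0 : ℝ := min A (b - 1) with hA0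
  have hA0b : A0 < b := lt_of_le_of_lt (min_le_right _ _) (by linarith)
  have hA0M : A0 < M := hA0b.trans hbM
  have hfA0 : f A0 < f b := hA (min A (b - 1)) (min_le_left _ _)
  obtain ⟨c, hcmem, hcmax⟩ := isCompact_Icc.exists_isMaxOn
    (Set.nonempty_Icc.mpr hA0M.le) (hf.continuous.continuousOn (s := Icc A0 M))
  have hcb : f b ≤ f c := hcmax (Set.mem_Icc.mpr ⟨hA0b.le, hbM.le⟩)
  have hcA0 : c ≠ A0 := fun h => by rw [h] at hcb; linarith
  have hcM : c ≠ M := fun h => by rw [h, hM] at hcb; linarith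
  have hcIoo : c ∈ Ioo A0 M := ⟨(hcmem.1).lt_of_ne (Ne.symm hcA0), (hcmem.2).lt_of_ne hcM⟩
  refine ⟨c, hcIoo.2, ?_⟩
  have : IsLocalMax f c := hcmax.isLocalMax (Icc_mem_nhds hcIoo.1 hcIoo.2)
  exact this.deriv_eq_zero

lemma rolle_atBot (f : ℝ → ℝ) (hf : Differentiable ℝ f) (M : ℝ)
    (hM : f M = 0) (hbot : Tendsto f atBot (nhds 0)) :
    ∃ y < M, deriv f y = 0 := by
  by_cases h : ∃ b < M, f b ≠ 0
  · obtain ⟨b, hbM, hb⟩ := h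
    rcases hb.lt_or_gt with hb | hb
    · have hneg : Tendsto (fun x => -f x) atBot (nhds 0) := by simpa using hbot.neg
      obtain ⟨y, hy, hy'⟩ := rolle_aux (fun x => -f x) hf.neg M b hbM
        (by simp [hM]) (by simpa using hb) hneg
      refine ⟨y, hy, ?_⟩
      have : deriv (fun x => -f x) y = -deriv f y := deriv.neg
      rw [this, neg_eq_zero] at hy'
      exact hy'
    · exact rolle_aux f hf M b hbM hM hb hbot
  · push_neg at h
    refine ⟨M - 1, by linarith, ?_⟩
    have heq : f =ᶠ[nhds (M - 1)] fun _ => 0 := by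
      filter_upwards [Iio_mem_nhds (show M - 1 < M by linarith)] with x hx
      exact h x hx
    rw [heq.deriv_eq, deriv_const]

lemma rolle_atTop (f : ℝ → ℝ) (hf : Differentiable ℝ f) (M : ℝ)
    (hM : f M = 0) (htop : Tendsto f atTop (nhds 0)) :
    ∃ y > M, deriv f y = 0 := by
  obtain ⟨y, hy, hy'⟩ := rolle_atBot (fun x => f (-x)) (hf.comp differentiable_neg) (-M)
    (by simpa using hM) (htop.comp tendsto_neg_atBot_atTop)
  have hd : HasDerivAt (fun x => f (-x)) (deriv f (-y) * -1) y := by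
    have h1 : HasDerivAt (fun x : ℝ => -x) (-1) y := (hasDerivAt_id y).neg
    exact HasDerivAt.comp y ((hf (-y)).hasDerivAt) h1
  rw [hd.deriv] at hy'
  exact ⟨-y, by linarith, by linarith⟩

/-- From `s.card` zeros of `f` (with `f → 0` at `-∞`) we get `s.card` zeros of `deriv f`,
each strictly to the left of some element of `s`. -/
lemma key (f : ℝ → ℝ) (hf : Differentiable ℝ f) (hbot : Tendsto f atBot (nhds 0)) :
    ∀ s : Finset ℝ, (∀ x ∈ s, f x = 0) →
      ∃ t : Finset ℝ, t.card = s.card ∧ (∀ y ∈ t, deriv f y = 0) ∧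
        (∀ y ∈ t, ∃ x ∈ s, y < x) := by
  intro s
  induction s using Finset.strongInduction with
  | _ s ih =>
    intro hs
    rcases s.eq_empty_or_nonempty with rfl | hne
    · exact ⟨∅, by simp, by simp, by simp⟩
    set M := s.max' hne with hMdef
    have hMs : M ∈ s := s.max'_mem hne
    set s' := s.erase M with hs'def
    have hsub : s' ⊂ s := Finset.erase_ssubset hMs
    obtain ⟨t', ht'card, ht'zero, ht'lt⟩ :=
      ih s' hsub (fun x hx => hs x (Finset.mem_of_mem_erase hx))
    rcases s'.eq_empty_or_nonempty with h' | hne'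
    · have hsM : s = {M} := by
        apply Finset.eq_singleton_iff_unique_mem.mpr
        refine ⟨hMs, fun x hx => ?_⟩
        by_contra hxM
        exact Finset.notMem_empty x (h' ▸ Finset.mem_erase.mpr ⟨hxM, hx⟩)
      obtain ⟨y, hyM, hy⟩ := rolle_atBot f hf M (hs M hMs) hbot
      exact ⟨{y}, by simp [hsM], by simpa using hy, by
        intro z hz; simp at hz; exact ⟨M, hMs, hz ▸ hyM⟩⟩
    · set M' := s'.max' hne' with hM'def
      have hM's' : M' ∈ s' := s'.max'_mem hne'
      have hM'M : M' < M :=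
        lt_of_le_of_ne (s.le_max' M' (Finset.mem_of_mem_erase hM's'))
          (Finset.mem_erase.mp hM's').1
      obtain ⟨c, hcmem, hc0⟩ := exists_deriv_eq_zero hM'M hf.continuous.continuousOn
        (by rw [hs M' (Finset.mem_of_mem_erase hM's'), hs M hMs])
      have hct' : c ∉ t' := by
        intro hct
        obtain ⟨x, hxs', hcx⟩ := ht'lt c hct
        exact absurd (lt_of_lt_of_le hcx (s'.le_max' x hxs')) (not_lt.mpr hcmem.1.le)
      refine ⟨insert c t', ?_, ?_, ?_⟩
      · rw [Finset.card_insert_of_notMem hct', ht'card, hs'def,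
          Finset.card_erase_of_mem hMs]
        have := Finset.card_pos.mpr hne
        omega
      · intro y hy
        rcases Finset.mem_insert.mp hy with rfl | hy
        · exact hc0
        · exact ht'zero y hy
      · intro y hy
        rcases Finset.mem_insert.mp hy with rfl | hy
        · exact ⟨M, hMs, hcmem.2⟩
        · obtain ⟨x, hx, hyx⟩ := ht'lt y hy
          exact ⟨x, Finset.mem_of_mem_erase hx, hyx⟩

lemma key2 (f : ℝ → ℝ) (hf : Differentiable ℝ f) (hbot : Tendsto f atBot (nhds 0))
    (htop : Tendsto f atTop (nhds 0)) (s : Finset ℝ) (hne : s.Nonempty)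
    (hs : ∀ x ∈ s, f x = 0) :
    ∃ t : Finset ℝ, t.card = s.card + 1 ∧ ∀ y ∈ t, deriv f y = 0 := by
  obtain ⟨t, htc, htz, htlt⟩ := key f hf hbot s hs
  obtain ⟨y, hyM, hy⟩ := rolle_atTop f hf (s.max' hne) (hs _ (s.max'_mem hne)) htop
  have hyt : y ∉ t := by
    intro hyt
    obtain ⟨x, hxs, hyx⟩ := htlt y hyt
    exact absurd (hyx.trans_le (s.le_max' x hxs)) (not_lt.mpr hyM.le)
  refine ⟨insert y t, by rw [Finset.card_insert_of_notMem hyt, htc], ?_⟩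
  intro z hz
  rcases Finset.mem_insert.mp hz with rfl | hz
  · exact hy
  · exact htz z hz

/-- `He_n` has `n` distinct real zeros for `n ≥ 1`. -/
lemma hermite_zeros (n : ℕ) (hn : 1 ≤ n) :
    ∃ s : Finset ℝ, s.card = n ∧ ∀ x ∈ s, Polynomial.aeval x (Polynomial.hermite n) = 0 := by
  induction n, hn using Nat.le_induction with
  | base =>
    exact ⟨{0}, by simp, by intro x hx; simp at hx; simp [hx, hermite_one]⟩
  | succ n hn ih =>
    obtain ⟨s, hscard, hszero⟩ := ih
    set f : ℝ → ℝ := fun x => (-1 : ℝ) ^ n * aeval x (hermite n) * Real.exp (-(x ^ 2 / 2))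
      with hfdef
    have hgauss : ∀ x, deriv^[n] (fun y => Real.exp (-(y ^ 2 / 2))) x = f x := fun x =>
      deriv_gaussian_eq_hermite_mul_gaussian n x
    have hf : Differentiable ℝ f := by
      apply Differentiable.mul
      · exact (differentiable_const _).mul (Polynomial.differentiable_aeval _)
      · exact Differentiable.exp (by fun_prop)
    have hfP : ∀ x : ℝ, f x =
        (((-1 : ℝ) ^ n) • ((hermite n).map (Int.castRingHom ℝ))).eval x *
          Real.exp (-(x ^ 2 / 2)) := by
      intro x
      simp [hfdef, eval_smul, Polynomial.eval_map, Polynomial.aeval_def, smul_eq_mul,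
        mul_assoc, ← Polynomial.eval₂_at_apply]
    have hbot : Tendsto f atBot (nhds 0) := by
      refine (poly_gauss_tendsto_atBot _).congr fun x => (hfP x).symm
    have htop : Tendsto f atTop (nhds 0) := by
      refine (poly_gauss_tendsto_atTop _).congr fun x => (hfP x).symm
    have hsne : s.Nonempty := Finset.card_pos.mp (by omega)
    obtain ⟨t, htcard, htzero⟩ := key2 f hf hbot htop s
      hsne (fun x hx => by simp [hfdef, hszero x hx])
    refine ⟨t, by omega, fun y hy => ?_⟩
    have hderiv : deriv f y =
        (-1 : ℝ) ^ (n + 1) * aeval y (hermite (n + 1)) * Real.exp (-(y ^ 2 / 2)) := by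
      rw [← deriv_gaussian_eq_hermite_mul_gaussian (n + 1) y,
        Function.iterate_succ_apply', funext hgauss]
    have h0 := htzero y hy
    rw [hderiv] at h0
    have hexp : Real.exp (-(y ^ 2 / 2)) ≠ 0 := Real.exp_ne_zero _
    have hpow : ((-1 : ℝ) ^ (n + 1)) ≠ 0 := pow_ne_zero _ (by norm_num)
    rcases mul_eq_zero.mp h0 with h | h
    · rcases mul_eq_zero.mp h with h | h
      · exact absurd h hpow
      · exact h
    · exact absurd h hexp

theorem hermite_real_roots_simple (n : ℕ) (hn : 1 ≤ n) :
    ((Polynomial.hermite n).map (Int.castRingHom ℝ)).natDegree = n ∧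
    Polynomial.Splits ((Polynomial.hermite n).map (Int.castRingHom ℝ)) ∧
    ((Polynomial.hermite n).map (Int.castRingHom ℝ)).roots.Nodup ∧
    Multiset.card ((Polynomial.hermite n).map (Int.castRingHom ℝ)).roots = n := by
  set P : Polynomial ℝ := (Polynomial.hermite n).map (Int.castRingHom ℝ) with hPdef
  have hPmonic : P.Monic := (hermite_monic n).map _
  have hPdeg : P.natDegree = n := by
    rw [hPdef, (hermite_monic n).natDegree_map, natDegree_hermite]
  have hPne : P ≠ 0 := hPmonic.ne_zero
  obtain ⟨s, hscard, hszero⟩ := hermite_zeros n hn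
  have hsub : s ⊆ P.roots.toFinset := by
    intro x hx
    rw [Multiset.mem_toFinset, Polynomial.mem_roots hPne]
    have : P.eval x = 0 := by
      rw [hPdef, Polynomial.eval_map, ← algebraMap_int_eq, ← Polynomial.aeval_def]
      exact hszero x hx
    exact this
  have h1 : n ≤ P.roots.toFinset.card := hscard ▸ Finset.card_le_card hsub
  have h2 : P.roots.toFinset.card ≤ Multiset.card P.roots := Multiset.toFinset_card_le _
  have h3 : Multiset.card P.roots ≤ n := hPdeg ▸ P.card_roots'
  have hcard : Multiset.card P.roots = n := le_antisymm h3 (h1.trans h2)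
  have hnodup : P.roots.Nodup := by
    rw [← Multiset.toFinset_card_eq_card_iff_nodup]
    omega
  refine ⟨hPdeg, ?_, hnodup, hcard⟩
  rw [splits_iff_card_roots, hcard, hPdeg]
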